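/- Let S be a 3-cutset of G. If G − S has more than 3 connected components, then S is independent with every 3-cutset of G. If G − S has exactly 3 connected components and T is a 3-cutset dependent with S, then there exists a vertex a ∈ S such that {a} is a connected component of G − T and every connected component of G − S contains a vertex of T (that is, T is a trivial cutset subordinated to S). -/

import Mathlib

namespace Paper

variable {V : Type*}

/-- `S ⊆ V(G)` is a cutset of `G`: the graph `G − S` is disconnected. -/
def IsCutset (G : SimpleGraph V) (S : Set V) : Prop :=
  ¬ (G.induce (Sᶜ : Set V)).Connected

/-- A 3-cutset: a cutset of exactly 3 vertices. -/
def IsThreeCutset (G : SimpleGraph V) (S : Set V) : Prop :=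
  S.ncard = 3 ∧ IsCutset G S

/-- `G` is triconnected: at least 4 vertices and deleting any at most 2 vertices
leaves a connected graph. -/
def IsTriconnected [Fintype V] (G : SimpleGraph V) : Prop :=
  4 ≤ Fintype.card V ∧
    ∀ X : Set V, X.ncard ≤ 2 → (G.induce (Xᶜ : Set V)).Connected

/-- `x` and `y` both survive the deletion of `R` and lie in the same connected
component of `G − R`. -/
def ReachOutside (G : SimpleGraph V) (R : Set V) (x y : V) : Prop :=
  ∃ (hx : x ∈ (Rᶜ : Set V)) (hy : y ∈ (Rᶜ : Set V)),
    (G.induce (Rᶜ : Set V)).Reachable ⟨x, hx⟩ ⟨y, hy⟩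

/-- `R` splits `X`: two vertices of `X \ R` lie in different connected components
of `G − R`. -/
def Splits (G : SimpleGraph V) (R X : Set V) : Prop :=
  ∃ x ∈ X, ∃ y ∈ X, x ∉ R ∧ y ∉ R ∧ ¬ ReachOutside G R x y

/-- Two 3-cutsets are dependent iff one splits the other. -/
def Dependent (G : SimpleGraph V) (S T : Set V) : Prop :=
  Splits G S T ∨ Splits G T S

/-- The connected component of `G − R` containing `u` (empty if `u ∈ R`). -/
def compOutside (G : SimpleGraph V) (R : Set V) (u : V) : Set V :=
  {y | ReachOutside G R u y}

/-- `C` is a connected component of `G − R`. -/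
def IsCompOutside (G : SimpleGraph V) (R : Set V) (C : Set V) : Prop :=
  ∃ u, u ∉ R ∧ C = compOutside G R u

variable {G : SimpleGraph V} {R S T : Set V} {x y z u s : V}

lemma ReachOutside.notL (h : ReachOutside G R x y) : x ∉ R := by
  obtain ⟨hx, -, -⟩ := h; exact hx

lemma ReachOutside.notR (h : ReachOutside G R x y) : y ∉ R := by
  obtain ⟨-, hy, -⟩ := h; exact hy

lemma reachOutside_refl (hx : x ∉ R) : ReachOutside G R x x := ⟨hx, hx, .refl _⟩

lemma ReachOutside.symm (h : ReachOutside G R x y) : ReachOutside G R y x := by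
  obtain ⟨hx, hy, hr⟩ := h; exact ⟨hy, hx, hr.symm⟩

lemma ReachOutside.trans (h : ReachOutside G R x y) (h' : ReachOutside G R y z) :
    ReachOutside G R x z := by
  obtain ⟨hx, hy, hr⟩ := h; obtain ⟨hy', hz, hr'⟩ := h'
  exact ⟨hx, hz, hr.trans hr'⟩

lemma reachOutside_of_adj (h : G.Adj x y) (hx : x ∉ R) (hy : y ∉ R) :
    ReachOutside G R x y := ⟨hx, hy, SimpleGraph.Adj.reachable (by exact h)⟩

lemma reachOutside_iff_walk :
    ReachOutside G R x y ↔ ∃ w : G.Walk x y, ∀ v ∈ w.support, v ∉ R := by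
  constructor
  · rintro ⟨hx, hy, ⟨p⟩⟩
    refine ⟨p.map ⟨Subtype.val, fun h => h⟩, ?_⟩
    intro v hv
    rw [SimpleGraph.Walk.support_map, List.mem_map] at hv
    obtain ⟨⟨a, ha⟩, -, rfl⟩ := hv
    exact ha
  · rintro ⟨w, hw⟩
    induction w with
    | nil => exact reachOutside_refl (hw _ (by simp))
    | @cons a b c h p ih =>
      have ha : a ∉ R := hw _ (by simp)
      have hb : b ∉ R := hw _ (by simp)
      exact (reachOutside_of_adj h ha hb).trans
        (ih (fun v hv => hw v (by simp [hv])))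

lemma mem_compOutside : y ∈ compOutside G R u ↔ ReachOutside G R u y := Iff.rfl

lemma self_mem_compOutside (hu : u ∉ R) : u ∈ compOutside G R u := reachOutside_refl hu

lemma walk_stay {a b : V} (w : G.Walk a b) (hw : ∀ v ∈ w.support, v ∉ R)
    (ha : a ∈ compOutside G R u) : ∀ v ∈ w.support, v ∈ compOutside G R u := by
  induction w with
  | nil => intro v hv; rw [SimpleGraph.Walk.support_nil, List.mem_singleton] at hv; subst hv; exact ha
  | @cons a c b h p ih =>
    intro v hv
    rw [SimpleGraph.Walk.support_cons, List.mem_cons] at hv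
    rcases hv with rfl | hv
    · exact ha
    · have hc : c ∈ compOutside G R u :=
        ha.trans (reachOutside_of_adj h (hw _ (by simp)) (hw _ (by simp)))
      exact ih (fun v hv => hw v (by simp [hv])) hc v hv

lemma not_connected_of_not_reach (hx : x ∉ R) (hy : y ∉ R)
    (h : ¬ ReachOutside G R x y) : ¬ (G.induce (Rᶜ : Set V)).Connected := by
  intro hc
  exact h ⟨hx, hy, hc.preconnected _ _⟩

lemma exists_not_reach_of_not_connected (hne : ∃ v, v ∉ R)
    (h : ¬ (G.induce (Rᶜ : Set V)).Connected) :
    ∃ x y, x ∉ R ∧ y ∉ R ∧ ¬ ReachOutside G R x y := by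
  by_contra hc
  push_neg at hc
  apply h
  obtain ⟨v, hv⟩ := hne
  have : Nonempty (Rᶜ : Set V) := ⟨⟨v, hv⟩⟩
  refine ⟨fun a b => ?_⟩
  obtain ⟨h1, h2, hr⟩ := hc ↑a ↑b a.2 b.2
  convert hr

lemma reach_of_connected (hc : (G.induce (Rᶜ : Set V)).Connected)
    (hx : x ∉ R) (hy : y ∉ R) : ReachOutside G R x y :=
  ⟨hx, hy, hc.preconnected _ _⟩

/-- inner induction for the neighbor lemma -/
lemma walk_to_cut_vertex :
    ∀ {a s : V} (w : G.Walk a s), s ∈ S → (∀ v ∈ w.support, v ∉ S \ {s}) →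
      a ∈ compOutside G S u → ∃ v ∈ compOutside G S u, G.Adj s v := by
  intro a s w
  induction w with
  | nil =>
    intro hs _ ha
    exact absurd hs ha.notR
  | @cons a c b h p ih =>
    intro hs hw ha
    by_cases hcs : c = b
    · subst hcs
      exact ⟨a, ha, h.symm⟩
    · have hcS : c ∉ S := by
        have := hw c (by simp)
        simp only [Set.mem_diff, Set.mem_singleton_iff, not_and, not_not] at this
        intro hcs2; exact hcs (this hcs2)
      have haS : a ∉ S := ha.notR
      have hc : c ∈ compOutside G S u := ha.trans (reachOutside_of_adj h haS hcS)
      exact ih hs (fun v hv => hw v (by simp [hv])) hc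

/-- every cut vertex of a 3-cutset has a neighbor in every component -/
lemma exists_adj_comp [Fintype V] (htri : IsTriconnected G) (hScard : S.ncard = 3)
    (hu : u ∉ S) (hs : s ∈ S) : ∃ v ∈ compOutside G S u, G.Adj s v := by
  have hfin : S.Finite := Set.toFinite S
  have hcard : (S \ {s}).ncard ≤ 2 := by
    have := Set.ncard_diff_singleton_lt_of_mem hs hfin
    omega
  have hconn := htri.2 (S \ {s}) hcard
  have hus : u ∉ S \ {s} := fun h => hu h.1
  have hss : s ∉ S \ {s} := by simp
  have hreach : ReachOutside G (S \ {s}) u s := reach_of_connected hconn hus hss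
  rw [reachOutside_iff_walk] at hreach
  obtain ⟨w, hw⟩ := hreach
  exact walk_to_cut_vertex w hs hw (self_mem_compOutside hu)

/-- inner induction for the boundary lemma -/
lemma walk_stay_boundary {a b : V}
    (B : Set V) (hB : ∀ v ∈ R, (∃ p ∈ compOutside G R x, G.Adj v p) → v ∈ B)
    (w : G.Walk a b) (hw : ∀ v ∈ w.support, v ∉ B)
    (ha : a ∈ compOutside G R x) : b ∈ compOutside G R x := by
  induction w with
  | nil => exact ha
  | @cons a c b h p ih =>
    have hcB : c ∉ B := hw _ (by simp)
    have hc : c ∈ compOutside G R x := by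
      by_cases hcR : c ∈ R
      · exact absurd (hB c hcR ⟨a, ha, h.symm⟩) hcB
      · exact ha.trans (reachOutside_of_adj h ha.notR hcR)
    exact ih (fun v hv => hw v (by simp [hv])) hc

/-- the boundary of a component has at least 3 vertices -/
lemma three_le_boundary [Fintype V] (htri : IsTriconnected G) (hx : x ∉ R)
    {w : V} (hwR : w ∉ R) (hwC : w ∉ compOutside G R x) :
    3 ≤ ({v ∈ R | ∃ p ∈ compOutside G R x, G.Adj v p} : Set V).ncard := by
  set B : Set V := {v ∈ R | ∃ p ∈ compOutside G R x, G.Adj v p} with hBdef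
  by_contra hsmall
  push_neg at hsmall
  have hconn := htri.2 B (by omega)
  have hxB : x ∉ B := fun h => hx h.1
  have hwB : w ∉ B := fun h => hwR h.1
  have := reach_of_connected hconn hxB hwB
  rw [reachOutside_iff_walk] at this
  obtain ⟨wk, hwk⟩ := this
  exact hwC (walk_stay_boundary B (fun v hv hp => ⟨hv, hp⟩) wk hwk (self_mem_compOutside hx))


lemma sdiff_nonempty_of_ne (hS : S.ncard = 3) (hT : T.ncard = 3) (hfinT : T.Finite)
    (hne : S ≠ T) : (S \ T).Nonempty := by
  rw [Set.diff_nonempty]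
  intro hsub
  exact hne (Set.eq_of_subset_of_ncard_le hsub (by omega) hfinT)

lemma exists_notMem_of_card [Fintype V] (hT : T.ncard = 3) (h4 : 4 ≤ Fintype.card V) :
    ∃ v, v ∉ T := by
  by_contra h
  push_neg at h
  have : T = Set.univ := Set.eq_univ_of_forall h
  rw [this, Set.ncard_univ, Nat.card_eq_fintype_card] at hT
  omega

/-- if a `G − T` component avoids `S`, it is contained in a `G − S` component -/
lemma compOutside_subset_of_avoid {p : V} (hp : p ∉ T)
    (h : ∀ v ∈ compOutside G T p, v ∉ S) :
    compOutside G T p ⊆ compOutside G S p := by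
  intro v hv
  rw [mem_compOutside, reachOutside_iff_walk] at hv ⊢
  obtain ⟨w, hw⟩ := hv
  exact ⟨w, fun q hq => h q (walk_stay w hw (self_mem_compOutside hp) q hq)⟩

/-- every vertex of `T` has a neighbor in a `G − T` component, provided there
is a vertex outside `T` and outside the component -/
lemma boundary_full [Fintype V] (htri : IsTriconnected G) (hTcard : T.ncard = 3)
    {p : V} (hp : p ∉ T) {w0 : V} (hw0T : w0 ∉ T) (hw0D : w0 ∉ compOutside G T p) :
    ∀ t ∈ T, ∃ q ∈ compOutside G T p, G.Adj t q := by
  have h3 := three_le_boundary htri hp hw0T hw0D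
  have hsub : {v ∈ T | ∃ q ∈ compOutside G T p, G.Adj v q} ⊆ T := Set.sep_subset _ _
  have heq : {v ∈ T | ∃ q ∈ compOutside G T p, G.Adj v q} = T :=
    Set.eq_of_subset_of_ncard_le hsub (by omega) (Set.toFinite T)
  intro t ht
  rw [← heq] at ht
  exact ht.2

lemma indep [Fintype V] (htri : IsTriconnected G) (hS : IsThreeCutset G S)
    (hT : IsThreeCutset G T) (hne : S ≠ T) {u : V} (hu : u ∉ S)
    (hC0 : ∀ v ∈ compOutside G S u, v ∉ T) : ¬ Dependent G S T := by
  obtain ⟨s0, hs0S, hs0T⟩ := sdiff_nonempty_of_ne hS.1 hT.1 (Set.toFinite T) hne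
  -- every vertex of S \ T reaches s0 in G − T
  have key : ∀ v ∈ S, v ∉ T → ReachOutside G T s0 v := by
    intro v hvS hvT
    obtain ⟨c, hc, hadj⟩ := exists_adj_comp htri hS.1 hu hs0S
    obtain ⟨c', hc', hadj'⟩ := exists_adj_comp htri hS.1 hu hvS
    have hcc' : ReachOutside G T c c' := by
      have h2 : ReachOutside G S c c' := hc.symm.trans hc'
      rw [reachOutside_iff_walk] at h2 ⊢
      obtain ⟨w, hw⟩ := h2
      exact ⟨w, fun q hq => hC0 q (walk_stay w hw hc q hq)⟩
    exact (reachOutside_of_adj hadj hs0T (hC0 c hc)).trans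
      (hcc'.trans (reachOutside_of_adj hadj'.symm (hC0 c' hc') hvT))
  rintro (⟨t, htT, t', ht'T, htS, ht'S, hsplit⟩ | ⟨a, haS, b, hbS, haT, hbT, hsplit⟩)
  · -- S splits T : the hard case
    -- find a G−T component not containing s0
    obtain ⟨vT, hvT⟩ := exists_notMem_of_card hT.1 htri.1
    obtain ⟨x, y, hxT, hyT, hxy⟩ := exists_not_reach_of_not_connected ⟨vT, hvT⟩ hT.2
    obtain ⟨d, hdT, hds0⟩ : ∃ d, d ∉ T ∧ ¬ ReachOutside G T s0 d := by
      by_cases h1 : ReachOutside G T s0 x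
      · exact ⟨y, hyT, fun h2 => hxy (h1.symm.trans h2)⟩
      · exact ⟨x, hxT, h1⟩
    have hDS : ∀ v ∈ compOutside G T d, v ∉ S := by
      intro v hv hvS
      exact hds0 ((key v hvS hv.notR).trans hv.symm)
    have hDC := compOutside_subset_of_avoid hdT hDS
    have hs0D : s0 ∉ compOutside G T d := fun h => hds0 h.symm
    have hbd := boundary_full htri hT.1 hdT hs0T hs0D
    obtain ⟨q, hq, hadjq⟩ := hbd t htT
    obtain ⟨q', hq', hadjq'⟩ := hbd t' ht'T
    apply hsplit
    have h1 : ReachOutside G S t q := reachOutside_of_adj hadjq htS (hDS q hq)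
    have h2 : ReachOutside G S t' q' := reachOutside_of_adj hadjq' ht'S (hDS q' hq')
    exact h1.trans ((hDC hq).symm.trans (hDC hq')) |>.trans h2.symm
  · -- T splits S : immediate from key
    exact hsplit ((key a haS haT).symm.trans (key b hbS hbT))


lemma mk_eq_iff_reach {h1 : x ∈ (Sᶜ : Set V)} {h2 : y ∈ (Sᶜ : Set V)} :
    (G.induce (Sᶜ : Set V)).connectedComponentMk ⟨x, h1⟩ =
      (G.induce (Sᶜ : Set V)).connectedComponentMk ⟨y, h2⟩ ↔ ReachOutside G S x y := by
  rw [SimpleGraph.ConnectedComponent.eq]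
  exact ⟨fun r => ⟨h1, h2, r⟩, fun ⟨a, b, r⟩ => by convert r⟩

/-- when every component of `G − S` meets `T`, choose a `T`-vertex in each -/
lemma comp_choice (h : ∀ w, w ∉ S → (compOutside G S w ∩ T).Nonempty) :
    ∃ c : (G.induce (Sᶜ : Set V)).ConnectedComponent → V,
      Function.Injective c ∧ ∀ K, c K ∈ T ∧ ∃ h1 : c K ∈ (Sᶜ : Set V),
        (G.induce (Sᶜ : Set V)).connectedComponentMk ⟨c K, h1⟩ = K := by
  have hex : ∀ K : (G.induce (Sᶜ : Set V)).ConnectedComponent,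
      ∃ t, t ∈ T ∧ ∃ h1 : t ∈ (Sᶜ : Set V),
        (G.induce (Sᶜ : Set V)).connectedComponentMk ⟨t, h1⟩ = K := by
    intro K
    obtain ⟨⟨w, hw⟩, rfl⟩ := K.exists_rep
    obtain ⟨t, htC, htT⟩ := h w hw
    have ht1 : t ∈ (Sᶜ : Set V) := htC.notR
    exact ⟨t, htT, ht1, mk_eq_iff_reach.mpr htC.symm⟩
  choose c hc1 hc2 using hex
  refine ⟨c, ?_, fun K => ⟨hc1 K, hc2 K⟩⟩
  intro K K' heq
  obtain ⟨h1, hK⟩ := hc2 K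
  obtain ⟨h1', hK'⟩ := hc2 K'
  rw [← hK, ← hK']
  exact congrArg _ (Subtype.ext heq)

lemma not_dependent_self : ¬ Dependent G S S := by
  rintro (⟨a, haS, b, hbS, haS', -⟩ | ⟨a, haS, b, hbS, haS', -⟩) <;> exact haS' haS


/-- Lemma `l3v0`(1): a 3-cutset with more than 3 components is independent with
every 3-cutset; one with exactly 3 components only admits subordinated trivial
dependent cutsets. -/
theorem stmt_15 [Fintype V] (G : SimpleGraph V)
    (htri : IsTriconnected G) (hbig : 6 < Fintype.card V)
    (S : Set V) (hS : IsThreeCutset G S) :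
    (3 < Nat.card (G.induce (Sᶜ : Set V)).ConnectedComponent →
      ∀ T : Set V, IsThreeCutset G T → ¬ Dependent G S T) ∧
    (Nat.card (G.induce (Sᶜ : Set V)).ConnectedComponent = 3 →
      ∀ T : Set V, IsThreeCutset G T → Dependent G S T →
        ∃ a ∈ S, IsCompOutside G T {a} ∧
          ∀ C : Set V, IsCompOutside G S C → (C ∩ T).Nonempty) := by
  constructor
  · -- part 1
    intro hgt T hT
    rcases eq_or_ne S T with rfl | hne
    · exact not_dependent_self
    by_cases hall : ∀ w, w ∉ S → (compOutside G S w ∩ T).Nonempty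
    · exfalso
      obtain ⟨c, hcinj, hc⟩ := comp_choice hall
      have finj : Function.Injective (fun K => (⟨c K, (hc K).1⟩ : T)) := by
        intro K K' heq
        exact hcinj (congrArg Subtype.val heq)
      have := Nat.card_le_card_of_injective _ finj
      rw [Nat.card_coe_set_eq, hT.1] at this
      omega
    · push_neg at hall
      obtain ⟨w, hw, hempty⟩ := hall
      exact indep htri hS hT hne hw
        (fun v hv hvT => Set.eq_empty_iff_forall_notMem.mp hempty v ⟨hv, hvT⟩)
  · -- part 2
    intro hcard3 T hT hdep
    rcases eq_or_ne S T with rfl | hne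
    · exact absurd hdep not_dependent_self
    have hall : ∀ w, w ∉ S → (compOutside G S w ∩ T).Nonempty := by
      by_contra hall
      push_neg at hall
      obtain ⟨w, hw, hempty⟩ := hall
      exact indep htri hS hT hne hw
        (fun v hv hvT => Set.eq_empty_iff_forall_notMem.mp hempty v ⟨hv, hvT⟩) hdep
    obtain ⟨c, hcinj, hc⟩ := comp_choice hall
    have finj : Function.Injective (fun K => (⟨c K, (hc K).1⟩ : T)) := by
      intro K K' heq
      exact hcinj (congrArg Subtype.val heq)
    have fbij : Function.Bijective (fun K => (⟨c K, (hc K).1⟩ : T)) := by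
      rw [Nat.bijective_iff_injective_and_card]
      exact ⟨finj, by rw [Nat.card_coe_set_eq, hT.1, hcard3]⟩
    -- T is disjoint from S
    have hTS : ∀ t ∈ T, t ∉ S := by
      intro t htT
      obtain ⟨K, hK⟩ := fbij.2 ⟨t, htT⟩
      have : c K = t := congrArg Subtype.val hK
      rw [← this]
      exact (hc K).2.choose
    -- uniqueness of the T-vertex in each G−S component
    have huniq : ∀ p ∉ S, ∀ t ∈ T, ∀ t' ∈ T,
        t ∈ compOutside G S p → t' ∈ compOutside G S p → t = t' := by
      intro p hpS t htT t' ht'T htp ht'p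
      obtain ⟨K, hK⟩ := fbij.2 ⟨t, htT⟩
      obtain ⟨K', hK'⟩ := fbij.2 ⟨t', ht'T⟩
      have h1 : c K = t := congrArg Subtype.val hK
      have h1' : c K' = t' := congrArg Subtype.val hK'
      obtain ⟨hm, hmk⟩ := (hc K).2
      obtain ⟨hm', hmk'⟩ := (hc K').2
      have : K = K' := by
        rw [← hmk, ← hmk']
        have hr : ReachOutside G S (c K) (c K') := by
          rw [h1, h1']
          exact (htp.symm.trans ht'p)
        rw [mk_eq_iff_reach]
        exact hr
      rw [← h1, ← h1', this]
    -- two distinct components of G − S exist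
    obtain ⟨vS, hvS⟩ := exists_notMem_of_card hS.1 htri.1
    obtain ⟨x0, y0, hx0S, hy0S, hxy0⟩ := exists_not_reach_of_not_connected ⟨vS, hvS⟩ hS.2
    -- every component of G − T meets S
    have hmeetS : ∀ p, p ∉ T → (compOutside G T p ∩ S).Nonempty := by
      intro p hpT
      by_contra hempty
      rw [Set.not_nonempty_iff_eq_empty] at hempty
      have hDS : ∀ v ∈ compOutside G T p, v ∉ S := fun v hv hvS =>
        Set.eq_empty_iff_forall_notMem.mp hempty v ⟨hv, hvS⟩
      have hDC := compOutside_subset_of_avoid hpT hDS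
      obtain ⟨s0, hs0S⟩ : S.Nonempty := Set.nonempty_of_ncard_ne_zero (by rw [hS.1]; omega)
      have hs0T : s0 ∉ T := fun h => hTS s0 h hs0S
      have hs0D : s0 ∉ compOutside G T p := fun h => hDS s0 h hs0S
      have hbd := boundary_full htri hT.1 hpT hs0T hs0D
      -- every t in T lies in compOutside G S p
      have hpS : p ∉ S := hDS p (self_mem_compOutside hpT)
      have hTC : ∀ t ∈ T, t ∈ compOutside G S p := by
        intro t htT
        obtain ⟨q, hq, hadj⟩ := hbd t htT
        exact (hDC hq).trans (reachOutside_of_adj hadj.symm (hDS q hq) (hTS t htT))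
        -- careful direction
      -- contradiction: the T vertices of the two distinct components coincide
      have hK1 : (G.induce (Sᶜ : Set V)).connectedComponentMk ⟨x0, hx0S⟩ ≠
          (G.induce (Sᶜ : Set V)).connectedComponentMk ⟨y0, hy0S⟩ := by
        rw [Ne, mk_eq_iff_reach]; exact hxy0
      obtain ⟨tx, htxC, htxT⟩ := hall x0 hx0S
      obtain ⟨ty, htyC, htyT⟩ := hall y0 hy0S
      have h1 : tx = ty := huniq p hpS tx htxT ty htyT (hTC tx htxT) (hTC ty htyT)
      apply hK1
      rw [mk_eq_iff_reach]
      exact htxC.trans (h1 ▸ htyC.symm)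
    -- find a G−T component containing exactly one S-vertex
    obtain ⟨vT, hvT⟩ := exists_notMem_of_card hT.1 htri.1
    obtain ⟨x, y, hxT, hyT, hxy⟩ := exists_not_reach_of_not_connected ⟨vT, hvT⟩ hT.2
    have hdisj : Disjoint (compOutside G T x ∩ S) (compOutside G T y ∩ S) := by
      rw [Set.disjoint_left]
      rintro z ⟨hzx, -⟩ ⟨hzy, -⟩
      exact hxy (hzx.trans hzy.symm)
    have hsum : (compOutside G T x ∩ S).ncard + (compOutside G T y ∩ S).ncard ≤ 3 := by
      rw [← Set.ncard_union_eq hdisj (Set.toFinite _) (Set.toFinite _)]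
      calc ((compOutside G T x ∩ S) ∪ (compOutside G T y ∩ S)).ncard
          ≤ S.ncard := Set.ncard_le_ncard (by intro z hz; rcases hz with h | h <;> exact h.2)
            (Set.toFinite S)
        _ = 3 := hS.1
    have hx1 : 1 ≤ (compOutside G T x ∩ S).ncard :=
      (Set.ncard_pos (Set.toFinite _)).mpr (hmeetS x hxT)
    have hy1 : 1 ≤ (compOutside G T y ∩ S).ncard :=
      (Set.ncard_pos (Set.toFinite _)).mpr (hmeetS y hyT)
    obtain ⟨d, hdT, hd1⟩ : ∃ d, d ∉ T ∧ (compOutside G T d ∩ S).ncard = 1 := by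
      by_cases h1 : (compOutside G T x ∩ S).ncard = 1
      · exact ⟨x, hxT, h1⟩
      · exact ⟨y, hyT, by omega⟩
    obtain ⟨a, ha⟩ := Set.ncard_eq_one.mp hd1
    have haD : a ∈ compOutside G T d := (ha ▸ Set.mem_singleton a : a ∈ _ ∩ S).1
    have haS : a ∈ S := (ha ▸ Set.mem_singleton a : a ∈ _ ∩ S).2
    -- the component of d in G − T is exactly {a}
    have hDsub : compOutside G T d ⊆ {a} := by
      intro p hpD
      by_contra hpa
      rw [Set.mem_singleton_iff] at hpa
      have hpT : p ∉ T := hpD.notR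
      have hpS : p ∉ S := by
        intro hpS
        have h0 : p ∈ compOutside G T d ∩ S := ⟨hpD, hpS⟩
        rw [ha] at h0
        exact hpa h0
      obtain ⟨t, htC, htT⟩ := hall p hpS
      set R2 : Set V := {a, t} with hR2
      have hR2card : R2.ncard ≤ 2 :=
        le_trans (Set.ncard_insert_le a {t}) (by simp)
      have hconn := htri.2 R2 hR2card
      obtain ⟨s', hs'S, hs'a⟩ : ∃ s', s' ∈ S ∧ s' ≠ a := by
        by_contra h
        push_neg at h
        have hsub : S ⊆ {a} := fun z hz => h z hz
        have := Set.ncard_le_ncard hsub (Set.toFinite _)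
        rw [hS.1, Set.ncard_singleton] at this
        omega
      have htS2 : t ∉ S := hTS t htT
      have hs'R2 : s' ∉ R2 := by
        rintro (rfl | rfl)
        · exact hs'a rfl
        · exact htS2 hs'S
      have hpR2 : p ∉ R2 := by
        rintro (rfl | rfl)
        · exact hpa rfl
        · exact hpT htT
      have hreach := reach_of_connected hconn hpR2 hs'R2
      rw [reachOutside_iff_walk] at hreach
      obtain ⟨w, hw⟩ := hreach
      have hstay : ∀ {q b : V} (wk : G.Walk q b), (∀ v ∈ wk.support, v ∉ R2) →
          q ∈ compOutside G T d ∩ compOutside G S p →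
          b ∈ compOutside G T d ∩ compOutside G S p := by
        intro q b wk
        induction wk with
        | nil => exact fun _ hq => hq
        | @cons q v b hadj pw ih =>
          intro hsup hq
          have hvR2 : v ∉ R2 := hsup v (by simp)
          have hv : v ∈ compOutside G T d ∩ compOutside G S p := by
            by_cases hvT : v ∈ T
            · exfalso
              have hvS : v ∉ S := hTS v hvT
              have hvCp : v ∈ compOutside G S p :=
                hq.2.trans (reachOutside_of_adj hadj hq.2.notR hvS)
              have hvt : v = t := huniq p hpS v hvT t htT hvCp htC
              exact hvR2 (by rw [hR2, hvt]; simp)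
            · have hvD : v ∈ compOutside G T d :=
                hq.1.trans (reachOutside_of_adj hadj hq.1.notR hvT)
              have hvS : v ∉ S := by
                intro hvS
                have h0 : v ∈ compOutside G T d ∩ S := ⟨hvD, hvS⟩
                rw [ha] at h0
                exact hvR2 (by rw [hR2]; left; exact h0)
              exact ⟨hvD, hq.2.trans (reachOutside_of_adj hadj hq.2.notR hvS)⟩
          exact ih (fun z hz => hsup z (by simp [hz])) hv
      have hfin := hstay w hw ⟨hpD, self_mem_compOutside hpS⟩
      have h0 : s' ∈ compOutside G T d ∩ S := ⟨hfin.1, hs'S⟩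
      rw [ha] at h0
      exact hs'a h0
    have hDa : compOutside G T d = {a} :=
      Set.Subset.antisymm hDsub (Set.singleton_subset_iff.mpr haD)
    refine ⟨a, haS, ⟨d, hdT, hDa.symm⟩, ?_⟩
    rintro C ⟨w, hw, rfl⟩
    exact hall w hw


end Paper
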